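/- Let E be a symplectic vector space of dimension 2n, and let A, A' be Lagrangian subspaces with dim(A ∩ A') = n − 1. Let F be a Lagrangian subspace with dim(F ∩ A) = 1 and F ∩ A = F ∩ A'. Then A' ⊆ F + A, dim(F + A + A') = 2n − 1, and dim(F ∩ (A + A')) = 2. -/

import Mathlib

open Module

/-- Let `E` be a symplectic vector space of dimension `2n`, and `A`, `A'`
Lagrangian subspaces with `dim (A ∩ A') = n − 1`. If `F` is a Lagrangian
subspace with `dim (F ∩ A) = 1` and `F ∩ A = F ∩ A'`, then `A' ⊆ F + A`,
`dim (F + A + A') = 2n − 1`, and `dim (F ∩ (A + A')) = 2`. -/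
theorem statement6 (E : Type*) [AddCommGroup E] [Module ℂ E] [FiniteDimensional ℂ E]
    (n : ℕ) (hE : finrank ℂ E = 2 * n)
    (ω : LinearMap.BilinForm ℂ E)
    (halt : ∀ x, ω x x = 0)
    (hnd : ∀ x, (∀ y, ω x y = 0) → x = 0)
    (A A' F : Submodule ℂ E)
    (hA : A = ω.orthogonal A) (hA' : A' = ω.orthogonal A') (hF : F = ω.orthogonal F)
    (hAA' : finrank ℂ (A ⊓ A' : Submodule ℂ E) = n - 1)
    (hFA1 : finrank ℂ (F ⊓ A : Submodule ℂ E) = 1)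
    (hFAA' : F ⊓ A = F ⊓ A') :
    A' ≤ F ⊔ A ∧
    finrank ℂ (F ⊔ A ⊔ A' : Submodule ℂ E) = 2 * n - 1 ∧
    finrank ℂ (F ⊓ (A ⊔ A') : Submodule ℂ E) = 2 := by
  classical
  have hrefl : ω.IsRefl := LinearMap.IsAlt.isRefl halt
  have hndg : ω.Nondegenerate := hrefl.nondegenerate_iff_separatingLeft.2 hnd
  -- dimension of a Lagrangian is n
  have hdim : ∀ W : Submodule ℂ E, W = ω.orthogonal W → finrank ℂ W = n := by
    intro W hW
    have h1 := LinearMap.BilinForm.finrank_orthogonal hndg W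
    have h2 : finrank ℂ W ≤ finrank ℂ E := Submodule.finrank_le W
    rw [← hW, hE] at h1
    omega
  have hdA : finrank ℂ A = n := hdim A hA
  have hdA' : finrank ℂ A' = n := hdim A' hA'
  have hdF : finrank ℂ F = n := hdim F hF
  have hn1 : 1 ≤ n := by
    have := hFA1 ▸ (Submodule.finrank_mono (inf_le_right : F ⊓ A ≤ A))
    omega
  -- orthogonal of sup is inf of orthogonals
  have horthsup : ∀ U V : Submodule ℂ E,
      ω.orthogonal (U ⊔ V) = ω.orthogonal U ⊓ ω.orthogonal V := by
    intro U V
    apply le_antisymm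
    · exact le_inf (LinearMap.BilinForm.orthogonal_le le_sup_left)
        (LinearMap.BilinForm.orthogonal_le le_sup_right)
    · rintro x ⟨hxU, hxV⟩ y hy
      obtain ⟨u, hu, v, hv, rfl⟩ := Submodule.mem_sup.1 hy
      show ω (u + v) x = 0
      rw [map_add, LinearMap.add_apply, hxU u hu, hxV v hv, add_zero]
  -- key: F ⊓ A = orthogonal (F ⊔ A)
  have hkey : ω.orthogonal (F ⊔ A) = F ⊓ A := by
    rw [horthsup, ← hF, ← hA]
  have h1 : A' ≤ F ⊔ A := by
    have hle : F ⊓ A ≤ A' := hFAA' ▸ inf_le_right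
    calc A' = ω.orthogonal A' := hA'
      _ ≤ ω.orthogonal (F ⊓ A) := LinearMap.BilinForm.orthogonal_le hle
      _ = ω.orthogonal (ω.orthogonal (F ⊔ A)) := by rw [hkey]
      _ = F ⊔ A := LinearMap.BilinForm.orthogonal_orthogonal hndg hrefl _
  have hsup : F ⊔ A ⊔ A' = F ⊔ A := sup_eq_left.2 h1
  have hFA : finrank ℂ (F ⊔ A : Submodule ℂ E) + finrank ℂ (F ⊓ A : Submodule ℂ E)
      = finrank ℂ F + finrank ℂ A := Submodule.finrank_sup_add_finrank_inf_eq F A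
  have h2 : finrank ℂ (F ⊔ A ⊔ A' : Submodule ℂ E) = 2 * n - 1 := by
    rw [hsup]; omega
  refine ⟨h1, h2, ?_⟩
  have hAA'd : finrank ℂ (A ⊔ A' : Submodule ℂ E) + finrank ℂ (A ⊓ A' : Submodule ℂ E)
      = finrank ℂ A + finrank ℂ A' := Submodule.finrank_sup_add_finrank_inf_eq A A'
  have h3 : finrank ℂ (F ⊔ (A ⊔ A') : Submodule ℂ E) + finrank ℂ (F ⊓ (A ⊔ A') : Submodule ℂ E)
      = finrank ℂ F + finrank ℂ (A ⊔ A' : Submodule ℂ E) :=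
    Submodule.finrank_sup_add_finrank_inf_eq F (A ⊔ A')
  rw [← sup_assoc, hsup] at h3
  omega
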